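/- Let ε ∈ (0, 0.1) and r ∈ (0, 0.1), let f : ℝ → ℝ be either f(z) = exp(z) or f(z) = cosh(z), and let A, B ∈ ℝ^{n×n} be symmetric positive semidefinite matrices with ‖A‖_∞ ≤ r (every entry of A has absolute value at most r) and (1-ε)B ⪯ A ⪯ (1+ε)B in the Loewner order. Then ‖D(A)^{-1} f(A) - D(B)^{-1} f(B)‖_∞ ≤ 4 · (1 + ε + 2r) · r, where D(M) := diag(f(M)·1_n) and ‖M‖_∞ is the maximum absolute value of the entries of M. -/

import Mathlib

open Matrix

/-- The diagonal normalization matrix `D(M) = diag(f(M) 1_n)`. -/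
noncomputable def attnDiag {n : ℕ} (f : ℝ → ℝ) (M : Matrix (Fin n) (Fin n) ℝ) :
    Matrix (Fin n) (Fin n) ℝ :=
  Matrix.diagonal (fun i => ∑ j, f (M i j))

/-- The `ℓ∞`-norm of a matrix: the maximum absolute value of its entries. -/
noncomputable def entryInfNorm {n : ℕ} (M : Matrix (Fin n) (Fin n) ℝ) : ℝ :=
  ⨆ i, ⨆ j, |M i j|

lemma abs_entry_le_entryInfNorm {n : ℕ} (M : Matrix (Fin n) (Fin n) ℝ) (i j : Fin n) :
    |M i j| ≤ entryInfNorm M := by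
  refine le_trans ?_ (le_ciSup (Set.finite_range fun a => ⨆ b, |M a b|).bddAbove i)
  exact le_ciSup (Set.finite_range fun b => |M i b|).bddAbove j

lemma exp_quad {x : ℝ} (h0 : 0 ≤ x) (h1 : x ≤ 1) :
    Real.exp x ≤ 1 + x + (3 / 4) * x ^ 2 := by
  have h := Real.exp_bound' h0 h1 (n := 2) (by norm_num)
  simp [Finset.sum_range_succ] at h
  nlinarith [sq_nonneg x]

lemma row_entry_bound {n : ℕ} (f : ℝ → ℝ) (hf : f = Real.exp ∨ f = Real.cosh)
    (M : Matrix (Fin n) (Fin n) ℝ) (m : ℝ) (hm : 0 ≤ m)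
    (hM : ∀ i j, |M i j| ≤ m) (i j : Fin n) :
    |((attnDiag f M)⁻¹ * M.map f) i j - 1 / n| ≤ (Real.exp (2 * m) - 1) / n := by
  have hn : 0 < (n : ℝ) := by exact_mod_cast i.pos
  have hfb : ∀ x : ℝ, |x| ≤ m → Real.exp (-m) ≤ f x ∧ f x ≤ Real.exp m := by
    intro x hx
    rcases abs_le.1 hx with ⟨hx1, hx2⟩
    rcases hf with rfl | rfl
    · exact ⟨Real.exp_le_exp.2 hx1, Real.exp_le_exp.2 hx2⟩
    · constructor
      · calc Real.exp (-m) ≤ Real.exp 0 := Real.exp_le_exp.2 (by linarith)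
          _ = 1 := Real.exp_zero
          _ ≤ Real.cosh x := Real.one_le_cosh x
      · rw [Real.cosh_eq]
        have h1 : Real.exp x ≤ Real.exp m := Real.exp_le_exp.2 hx2
        have h2 : Real.exp (-x) ≤ Real.exp m := Real.exp_le_exp.2 (by linarith)
        linarith
  set s : ℝ := ∑ k, f (M i k) with hs
  have hslb : (n : ℝ) * Real.exp (-m) ≤ s := by
    calc (n : ℝ) * Real.exp (-m) = ∑ _k : Fin n, Real.exp (-m) := by
          simp [Finset.sum_const, nsmul_eq_mul]
      _ ≤ s := Finset.sum_le_sum fun k _ => (hfb _ (hM i k)).1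
  have hsub : s ≤ (n : ℝ) * Real.exp m := by
    calc s ≤ ∑ _k : Fin n, Real.exp m := Finset.sum_le_sum fun k _ => (hfb _ (hM i k)).2
      _ = (n : ℝ) * Real.exp m := by simp [Finset.sum_const, nsmul_eq_mul]
  have hspos : 0 < s := lt_of_lt_of_le (by positivity) hslb
  have hposall : ∀ a : Fin n, 0 < ∑ k, f (M a k) := fun a =>
    Finset.sum_pos (fun k _ => lt_of_lt_of_le (Real.exp_pos _) (hfb _ (hM a k)).1)
      ⟨i, Finset.mem_univ i⟩
  have hinv : (attnDiag f M)⁻¹ = Matrix.diagonal (fun a => (∑ k, f (M a k))⁻¹) := by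
    apply Matrix.inv_eq_right_inv
    rw [attnDiag, Matrix.diagonal_mul_diagonal]
    rw [show (fun a => (∑ k, f (M a k)) * (∑ k, f (M a k))⁻¹) = fun _ => (1 : ℝ) from
      funext fun a => mul_inv_cancel₀ (hposall a).ne', Matrix.diagonal_one]
  have hentry : ((attnDiag f M)⁻¹ * M.map f) i j = f (M i j) / s := by
    rw [hinv, Matrix.diagonal_mul, Matrix.map_apply, inv_mul_eq_div]
  rw [hentry]
  have hfj1 := (hfb _ (hM i j)).1
  have hfj2 := (hfb _ (hM i j)).2
  have e1 : Real.exp (2 * m) * Real.exp (-m) = Real.exp m := by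
    rw [← Real.exp_add]; ring_nf
  have e2 : Real.exp (-(2 * m)) * Real.exp m = Real.exp (-m) := by
    rw [← Real.exp_add]; ring_nf
  have hub : f (M i j) / s ≤ Real.exp (2 * m) / n := by
    rw [div_le_div_iff₀ hspos hn]
    nlinarith [Real.exp_pos (2 * m), Real.exp_pos (-m)]
  have hlb : Real.exp (-(2 * m)) / n ≤ f (M i j) / s := by
    rw [div_le_div_iff₀ hn hspos]
    nlinarith [Real.exp_pos (-(2 * m)), Real.exp_pos m]
  rw [abs_sub_le_iff]
  constructor
  · have : (Real.exp (2 * m) - 1) / n = Real.exp (2 * m) / n - 1 / n := by ring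
    rw [this]
    have h1n : (1 : ℝ) / n ≤ 1 / n := le_rfl
    linarith
  · have key : 1 - Real.exp (-(2 * m)) ≤ Real.exp (2 * m) - 1 := by
      have hh : Real.exp (-(2 * m)) * Real.exp (2 * m) = 1 := by
        rw [← Real.exp_add]; ring_nf; exact Real.exp_zero
      nlinarith [Real.one_le_exp (by linarith : (0:ℝ) ≤ 2 * m), Real.exp_pos (-(2 * m))]
    have : 1 / (n:ℝ) - Real.exp (-(2 * m)) / n = (1 - Real.exp (-(2 * m))) / n := by ring
    have h2 : (1 - Real.exp (-(2 * m))) / n ≤ (Real.exp (2 * m) - 1) / n := by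
      gcongr
    linarith

lemma psd_diag_nonneg {n : ℕ} {M : Matrix (Fin n) (Fin n) ℝ} (hM : M.PosSemidef) (i : Fin n) :
    0 ≤ M i i := by
  have h := hM.dotProduct_mulVec_nonneg (Pi.single i 1)
  simp [dotProduct, mulVec, Pi.single_apply] at h
  convert h using 1

lemma psd_pair {n : ℕ} {M : Matrix (Fin n) (Fin n) ℝ} (hM : M.PosSemidef) (i j : Fin n)
    (c : ℝ) : 0 ≤ M i i + c * M i j + c * M j i + c * c * M j j := by
  have h := hM.dotProduct_mulVec_nonneg (Pi.single i 1 + Pi.single j c)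
  simp [dotProduct, mulVec, Pi.single_apply, mul_add, add_mul, Finset.sum_add_distrib] at h
  ring_nf at h ⊢; linarith

theorem attention_error_from_loewner_perturbation {n : ℕ} (ε r : ℝ)
    (hε : ε ∈ Set.Ioo (0 : ℝ) 0.1) (hr : r ∈ Set.Ioo (0 : ℝ) 0.1)
    (f : ℝ → ℝ) (hf : f = Real.exp ∨ f = Real.cosh)
    (A B : Matrix (Fin n) (Fin n) ℝ)
    (hA : A.PosSemidef) (hB : B.PosSemidef)
    (hAr : entryInfNorm A ≤ r)
    (hlow : (A - (1 - ε) • B).PosSemidef)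
    (hupp : ((1 + ε) • B - A).PosSemidef) :
    entryInfNorm ((attnDiag f A)⁻¹ * A.map f - (attnDiag f B)⁻¹ * B.map f) ≤
      4 * (1 + ε + 2 * r) * r := by
  obtain ⟨hε0, hε1⟩ := hε
  obtain ⟨hr0, hr1⟩ := hr
  norm_num at hε1 hr1
  have hε1' : (0 : ℝ) < 1 - ε := by linarith
  have hAe : ∀ i j, |A i j| ≤ r := fun i j => (abs_entry_le_entryInfNorm A i j).trans hAr
  have hBd : ∀ i, B i i ≤ r / (1 - ε) := by
    intro i
    have h := psd_diag_nonneg hlow i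
    simp only [Matrix.sub_apply, Matrix.smul_apply, smul_eq_mul] at h
    have h2 := (abs_le.1 (hAe i i)).2
    rw [le_div_iff₀ hε1']
    nlinarith
  have hsym : ∀ i j, B j i = B i j := by
    intro i j
    have := congrFun (congrFun hB.1 i) j
    simpa [Matrix.conjTranspose_apply] using this
  have hBe : ∀ i j, |B i j| ≤ r / (1 - ε) := by
    intro i j
    by_cases hij : i = j
    · subst hij
      rw [abs_of_nonneg (psd_diag_nonneg hB i)]
      exact hBd i
    · have h1 := psd_pair hB i j 1
      have h2 := psd_pair hB i j (-1)
      have h3 := hBd i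
      have h4 := hBd j
      have h5 := hsym i j
      rw [abs_le]
      constructor <;> nlinarith
  have hRHS0 : (0 : ℝ) ≤ 4 * (1 + ε + 2 * r) * r := by nlinarith
  refine Real.iSup_le (fun i => Real.iSup_le (fun j => ?_) hRHS0) hRHS0
  set rB : ℝ := r / (1 - ε) with hrB
  have hrB0 : 0 ≤ rB := by positivity
  have hA' := row_entry_bound f hf A r hr0.le hAe i j
  have hB' := row_entry_bound f hf B rB hrB0 hBe i j
  rw [Matrix.sub_apply]
  have htri : |((attnDiag f A)⁻¹ * A.map f) i j - ((attnDiag f B)⁻¹ * B.map f) i j| ≤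
      (Real.exp (2 * r) - 1) / n + (Real.exp (2 * rB) - 1) / n := by
    have := abs_sub_le (((attnDiag f A)⁻¹ * A.map f) i j) ((1 : ℝ) / n)
      (((attnDiag f B)⁻¹ * B.map f) i j)
    rw [abs_sub_comm ((1 : ℝ) / n)] at this
    linarith
  have hn1 : (1 : ℝ) ≤ n := by exact_mod_cast Nat.succ_le_of_lt i.pos
  have hexp1 : (1 : ℝ) ≤ Real.exp (2 * r) := Real.one_le_exp (by linarith)
  have hexp2 : (1 : ℝ) ≤ Real.exp (2 * rB) := Real.one_le_exp (by linarith)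
  have hq1 : (Real.exp (2 * r) - 1) / n ≤ Real.exp (2 * r) - 1 :=
    div_le_self (by linarith) hn1
  have hq2 : (Real.exp (2 * rB) - 1) / n ≤ Real.exp (2 * rB) - 1 :=
    div_le_self (by linarith) hn1
  set y : ℝ := 2 * rB with hy
  have hyeq : y * (1 - ε) = 2 * r := by
    rw [hy, hrB]; field_simp
  have hy0 : 0 ≤ y := by positivity
  have hy1 : y ≤ (20 / 9) * r := by nlinarith
  have hy2 : y ≤ 2 * r + (20 / 9) * r * ε := by nlinarith
  have he1 : Real.exp (2 * r) ≤ 1 + 2 * r + (3 / 4) * (2 * r) ^ 2 :=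
    exp_quad (by linarith) (by linarith)
  have he2 : Real.exp y ≤ 1 + y + (3 / 4) * y ^ 2 := exp_quad hy0 (by linarith)
  have hfin : (Real.exp (2 * r) - 1) + (Real.exp (2 * rB) - 1) ≤ 4 * (1 + ε + 2 * r) * r := by
    rw [← hy]
    nlinarith [mul_nonneg (sub_nonneg.2 hy1) hy0,
      mul_nonneg (sub_nonneg.2 hy1) (by positivity : (0:ℝ) ≤ (20 / 9) * r),
      mul_pos hε0 hr0, sq_nonneg r]
  linarith
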